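/- arXiv:2205.15639 — 3 statements merged into one kernel-verified Lean document; each statement's English description precedes it below -/
import Mathlib

section
/- (Boundedness of the error signals.) Let b > 0, φ > 0, κ > 0 be constants, N a positive natural number, D* ∈ ℝ^N, e : ℝ → ℝ differentiable, D̂ : ℝ → ℝ^N differentiable, and ψ : ℝ → ℝ^N with e'(t) = b ⟨D̂(t) − D*, ψ(t)⟩ − κ e(t) and D̂'(t) = −φ e(t) ψ(t) for all t ≥ 0. Let V(0) = e(0)²/2 + (b/(2φ)) ‖D̂(0) − D*‖². Then for all t ≥ 0: |e(t)| ≤ √(2 V(0)) and ‖D̂(t) − D*‖ ≤ √(2 φ V(0)/b). -/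
open scoped RealInnerProductSpace

/-- Boundedness of the error signals: along the closed-loop error dynamics and the
adaptation law, `|e(t)| ≤ √(2 V(0))` and `‖D̂(t) - D*‖ ≤ √(2 φ V(0)/b)` for all `t ≥ 0`,
where `V(0) = e(0)²/2 + (b/(2φ)) ‖D̂(0) - D*‖²`. -/
theorem error_signals_bounded
    (b φ κ : ℝ) (hb : 0 < b) (hφ : 0 < φ) (hκ : 0 < κ)
    (N : ℕ) (hN : 0 < N)
    (Dstar : EuclideanSpace ℝ (Fin N))
    (e : ℝ → ℝ) (he : Differentiable ℝ e)
    (Dhat : ℝ → EuclideanSpace ℝ (Fin N)) (hDhat : Differentiable ℝ Dhat)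
    (ψ : ℝ → EuclideanSpace ℝ (Fin N))
    (herr : ∀ t : ℝ, 0 ≤ t → deriv e t = b * ⟪Dhat t - Dstar, ψ t⟫ - κ * e t)
    (hadapt : ∀ t : ℝ, 0 ≤ t → deriv Dhat t = -(φ * e t) • ψ t)
    (V₀ : ℝ)
    (hV₀ : V₀ = e 0 ^ 2 / 2 + (b / (2 * φ)) * ‖Dhat 0 - Dstar‖ ^ 2) :
    ∀ t : ℝ, 0 ≤ t →
      |e t| ≤ Real.sqrt (2 * V₀) ∧ ‖Dhat t - Dstar‖ ≤ Real.sqrt (2 * φ * V₀ / b) := by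
  set V : ℝ → ℝ := fun t => e t ^ 2 / 2 +
      (b / (2 * φ)) * ⟪Dhat t - Dstar, Dhat t - Dstar⟫ with hV
  have hVnorm : ∀ t, V t = e t ^ 2 / 2 + (b / (2 * φ)) * ‖Dhat t - Dstar‖ ^ 2 := by
    intro t
    show e t ^ 2 / 2 + (b / (2 * φ)) * ⟪Dhat t - Dstar, Dhat t - Dstar⟫ = _
    rw [real_inner_self_eq_norm_sq]
  have hVdiff : Differentiable ℝ V := by
    apply Differentiable.add
    · exact (he.pow 2).div_const 2
    · exact ((hDhat.sub_const Dstar).inner ℝ (hDhat.sub_const Dstar)).const_mul _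
  have hderiv : ∀ t : ℝ, 0 ≤ t → deriv V t = -κ * e t ^ 2 := by
    intro t ht
    have h1 : HasDerivAt e (deriv e t) t := (he t).hasDerivAt
    have h2 : HasDerivAt Dhat (-(φ * e t) • ψ t) t := by
      rw [← hadapt t ht]; exact (hDhat t).hasDerivAt
    have h2' : HasDerivAt (fun s => Dhat s - Dstar) (-(φ * e t) • ψ t) t :=
      h2.sub_const _
    have h3 : HasDerivAt (fun s => ⟪Dhat s - Dstar, Dhat s - Dstar⟫)
        (⟪Dhat t - Dstar, -(φ * e t) • ψ t⟫ + ⟪-(φ * e t) • ψ t, Dhat t - Dstar⟫) t :=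
      h2'.inner ℝ h2'
    have h4 : HasDerivAt V (2 * e t ^ 1 * deriv e t / 2 +
        (b / (2 * φ)) * (⟪Dhat t - Dstar, -(φ * e t) • ψ t⟫ +
          ⟪-(φ * e t) • ψ t, Dhat t - Dstar⟫)) t :=
      ((h1.pow 2).div_const 2).add (h3.const_mul _)
    rw [h4.deriv, herr t ht, real_inner_smul_left, real_inner_smul_right,
      real_inner_comm (ψ t) (Dhat t - Dstar)]
    field_simp
    ring
  have hmono : AntitoneOn V (Set.Ici (0:ℝ)) := by
    apply antitoneOn_of_deriv_nonpos (convex_Ici 0) hVdiff.continuous.continuousOn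
      hVdiff.differentiableOn
    intro x hx
    rw [interior_Ici] at hx
    rw [hderiv x (le_of_lt hx)]
    nlinarith [sq_nonneg (e x), hκ.le]
  have hV0 : V 0 = V₀ := by rw [hVnorm 0, hV₀]
  intro t ht
  have hle : V t ≤ V₀ := hV0 ▸ hmono (Set.self_mem_Ici) ht ht
  have hVt := hVnorm t
  have hnn : (0:ℝ) ≤ ‖Dhat t - Dstar‖ ^ 2 := sq_nonneg _
  have hcoef : (0:ℝ) < b / (2 * φ) := by positivity
  have hle' : e t ^ 2 / 2 + b / (2 * φ) * ‖Dhat t - Dstar‖ ^ 2 ≤ V₀ := hVt ▸ hle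
  constructor
  · have h1 : e t ^ 2 ≤ 2 * V₀ := by nlinarith [mul_nonneg hcoef.le hnn]
    calc |e t| = Real.sqrt (e t ^ 2) := (Real.sqrt_sq_eq_abs _).symm
    _ ≤ Real.sqrt (2 * V₀) := Real.sqrt_le_sqrt h1
  · have h2 : ‖Dhat t - Dstar‖ ^ 2 ≤ 2 * φ * V₀ / b := by
      have he2 : (0:ℝ) ≤ e t ^ 2 := sq_nonneg _
      have hx : b / (2 * φ) * ‖Dhat t - Dstar‖ ^ 2 ≤ V₀ := by linarith
      rw [div_mul_eq_mul_div] at hx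
      have hbx := (div_le_iff₀ (by positivity : (0:ℝ) < 2 * φ)).mp hx
      rw [le_div_iff₀ hb]
      nlinarith
    calc ‖Dhat t - Dstar‖ = Real.sqrt (‖Dhat t - Dstar‖ ^ 2) :=
        (Real.sqrt_sq (norm_nonneg _)).symm
    _ ≤ Real.sqrt (2 * φ * V₀ / b) := Real.sqrt_le_sqrt h2
end

section
/- (Square-integrability of the combined error.) Let b > 0, φ > 0, κ > 0 be constants, N a positive natural number, D* ∈ ℝ^N, e : ℝ → ℝ differentiable, D̂ : ℝ → ℝ^N differentiable, and ψ : ℝ → ℝ^N with e'(t) = b ⟨D̂(t) − D*, ψ(t)⟩ − κ e(t) and D̂'(t) = −φ e(t) ψ(t) for all t ≥ 0. Then for every T ≥ 0, ∫₀^T e(t)² dt ≤ V(0)/κ, where V(0) = e(0)²/2 + (b/(2φ)) ‖D̂(0) − D*‖²; in particular e ∈ L²([0,∞)). -/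
open scoped RealInnerProductSpace

/-- Square-integrability of the combined error: along the closed-loop error dynamics and
the adaptation law, `∫₀ᵀ e² ≤ V(0)/κ` for every `T ≥ 0`, and `e² is integrable on
`[0, ∞)` (i.e. `e ∈ L²([0,∞))`). -/
theorem combined_error_square_integrable
    (b φ κ : ℝ) (hb : 0 < b) (hφ : 0 < φ) (hκ : 0 < κ)
    (N : ℕ) (hN : 0 < N)
    (Dstar : EuclideanSpace ℝ (Fin N))
    (e : ℝ → ℝ) (he : Differentiable ℝ e)
    (Dhat : ℝ → EuclideanSpace ℝ (Fin N)) (hDhat : Differentiable ℝ Dhat)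
    (ψ : ℝ → EuclideanSpace ℝ (Fin N))
    (herr : ∀ t : ℝ, 0 ≤ t → deriv e t = b * ⟪Dhat t - Dstar, ψ t⟫ - κ * e t)
    (hadapt : ∀ t : ℝ, 0 ≤ t → deriv Dhat t = -(φ * e t) • ψ t)
    (V₀ : ℝ)
    (hV₀ : V₀ = e 0 ^ 2 / 2 + (b / (2 * φ)) * ‖Dhat 0 - Dstar‖ ^ 2) :
    (∀ T : ℝ, 0 ≤ T → ∫ t in (0 : ℝ)..T, e t ^ 2 ≤ V₀ / κ) ∧
      MeasureTheory.IntegrableOn (fun t => e t ^ 2) (Set.Ici (0 : ℝ)) := by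
  set V : ℝ → ℝ := fun t => e t ^ 2 / 2 + (b / (2 * φ)) * ‖Dhat t - Dstar‖ ^ 2 with hV
  -- V is nonnegative
  have hVnn : ∀ t, 0 ≤ V t := by
    intro t
    have h1 : (0:ℝ) ≤ e t ^ 2 / 2 := by positivity
    have h2 : (0:ℝ) ≤ (b / (2 * φ)) * ‖Dhat t - Dstar‖ ^ 2 := by positivity
    exact add_nonneg h1 h2
  -- derivative of V
  have hVderiv : ∀ t : ℝ, 0 ≤ t → HasDerivAt V (-(κ * e t ^ 2)) t := by
    intro t ht
    have he' : HasDerivAt e (b * ⟪Dhat t - Dstar, ψ t⟫ - κ * e t) t := by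
      have := (he t).hasDerivAt
      rwa [herr t ht] at this
    have hg : HasDerivAt (fun s => Dhat s - Dstar) (-(φ * e t) • ψ t) t := by
      have := (hDhat t).hasDerivAt
      rw [hadapt t ht] at this
      simpa using this.sub_const Dstar
    have hinner : HasDerivAt (fun s => ⟪Dhat s - Dstar, Dhat s - Dstar⟫)
        (⟪Dhat t - Dstar, -(φ * e t) • ψ t⟫ + ⟪-(φ * e t) • ψ t, Dhat t - Dstar⟫) t :=
      hg.inner ℝ hg
    have hnorm : HasDerivAt (fun s => ‖Dhat s - Dstar‖ ^ 2)
        (2 * (-(φ * e t)) * ⟪Dhat t - Dstar, ψ t⟫) t := by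
      have heq : (fun s => ‖Dhat s - Dstar‖ ^ 2) = fun s => ⟪Dhat s - Dstar, Dhat s - Dstar⟫ := by
        funext s
        rw [real_inner_self_eq_norm_sq]
      rw [heq]
      convert hinner using 1
      rw [real_inner_smul_right, real_inner_smul_left, real_inner_comm]
      ring
    have hsq : HasDerivAt (fun s => e s ^ 2 / 2)
        (e t * (b * ⟪Dhat t - Dstar, ψ t⟫ - κ * e t)) t := by
      have := (he'.fun_pow 2).div_const 2
      refine this.congr_deriv ?_
      ring
    have := hsq.add (hnorm.const_mul (b / (2 * φ)))
    refine this.congr_deriv ?_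
    field_simp
    ring
  -- FTC bound
  have key : ∀ T : ℝ, 0 ≤ T → ∫ t in (0:ℝ)..T, e t ^ 2 ≤ V₀ / κ := by
    intro T hT
    have hcont : Continuous fun t => -(κ * e t ^ 2) :=
      (continuous_const.mul (he.continuous.pow 2)).neg
    have hftc : ∫ t in (0:ℝ)..T, -(κ * e t ^ 2) = V T - V 0 := by
      apply intervalIntegral.integral_eq_sub_of_hasDerivAt
      · intro t ht
        rw [Set.uIcc_of_le hT] at ht
        exact hVderiv t ht.1
      · exact hcont.intervalIntegrable 0 T
    have h1 : ∫ t in (0:ℝ)..T, -(κ * e t ^ 2) = -(κ * ∫ t in (0:ℝ)..T, e t ^ 2) := by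
      simp [intervalIntegral.integral_const_mul, intervalIntegral.integral_neg]
    have h2 : κ * ∫ t in (0:ℝ)..T, e t ^ 2 = V 0 - V T := by
      have := hftc
      rw [h1] at this
      linarith
    have h3 : κ * ∫ t in (0:ℝ)..T, e t ^ 2 ≤ V₀ := by
      have := hVnn T
      have hV0 : V 0 = V₀ := by rw [hV₀]
      linarith
    rw [le_div_iff₀ hκ]
    linarith [mul_comm (∫ t in (0:ℝ)..T, e t ^ 2) κ]
  refine ⟨key, ?_⟩
  have hcont2 : Continuous fun t => e t ^ 2 := he.continuous.pow 2
  rw [integrableOn_Ici_iff_integrableOn_Ioi]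
  apply MeasureTheory.integrableOn_Ioi_of_intervalIntegral_norm_bounded (V₀ / κ) (0:ℝ)
    (b := fun n : ℕ => (n : ℝ)) (l := Filter.atTop)
  · intro i
    exact (hcont2.integrableOn_Ioc)
  · exact tendsto_natCast_atTop_atTop
  · filter_upwards with n
    have hn : (0:ℝ) ≤ (n:ℝ) := Nat.cast_nonneg n
    have := key n hn
    calc (∫ x in (0:ℝ)..(n:ℝ), ‖e x ^ 2‖) = ∫ x in (0:ℝ)..(n:ℝ), e x ^ 2 := by
          congr 1; funext x; exact Real.norm_of_nonneg (sq_nonneg _)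
      _ ≤ V₀ / κ := this
end

section
/- (Main theorem: global stability and trajectory tracking of the adaptive fuzzy controller.) Let a₀, a₁, a₂ ∈ ℝ, b > 0, c₀ > 0, c₁ > 0, κ > 0, φ > 0 be constants, N a positive natural number, D* ∈ ℝ^N, and Ψ : ℝ → ℝ^N a function with ‖Ψ(z)‖ ≤ 1 for all z. Let x_d : ℝ → ℝ be three times differentiable with x_d, x_d', x_d'', x_d''' bounded on [0,∞). Let x : [0,∞) → ℝ be three times differentiable, D̂ : [0,∞) → ℝ^N differentiable, and d : [0,∞) → ℝ. Set x̃ = x − x_d, e = c₀ x̃ + c₁ x̃' + x̃'', û(t) = b⁻¹(a₀ x(t) + a₁ x'(t) + a₂ x''(t) + x_d'''(t) − c₁ x̃''(t) − c₀ x̃'(t)), and u(t) = û(t) + ⟨D̂(t), Ψ(û(t))⟩ − κ e(t). Suppose for all t ≥ 0: x'''(t) = −a₀ x(t) − a₁ x'(t) − a₂ x''(t) + b u(t) − b d(t), D̂'(t) = −φ e(t) Ψ(û(t)), and ⟨D*, Ψ(û(t))⟩ = d(t). Then: (i) e and D̂ − D* are bounded on [0,∞); (ii) e(t) → 0 as t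 → ∞; (iii) x̃(t) → 0 and x̃'(t) → 0 as t → ∞. -/
open Filter
open scoped RealInnerProductSpace

private lemma decay_aux (r : ℂ) (hr : r.re < 0) (z f : ℝ → ℂ)
    (hf : Continuous f)
    (hode : ∀ t : ℝ, HasDerivAt z (r * z t + f t) t)
    (hf0 : Tendsto f atTop (nhds 0)) : Tendsto z atTop (nhds 0) := by
  set μ : ℝ := -r.re with hμdef
  have hμ : 0 < μ := by simpa [hμdef] using hr
  set g : ℝ → ℂ := fun t => Complex.exp (-(r * t)) * z t with hg
  have hgd : ∀ t : ℝ, HasDerivAt g (Complex.exp (-(r * t)) * f t) t := by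
    intro t
    have h1 : HasDerivAt (fun s : ℝ => -(r * (s : ℂ))) (-r) t := by
      have := ((Complex.ofRealCLM.hasDerivAt (x := t)).const_mul r).neg
      exact this.congr_deriv (by simp)
    have h2 := (h1.cexp).mul (hode t)
    refine h2.congr_deriv ?_
    ring
  rw [NormedAddCommGroup.tendsto_nhds_zero]
  intro ε hε
  have hf' : ∀ᶠ s in atTop, ‖f s‖ ≤ μ * ε / 2 := by
    have := (NormedAddCommGroup.tendsto_nhds_zero.mp hf0) (μ * ε / 2) (by positivity)
    exact this.mono fun s hs => le_of_lt hs
  obtain ⟨t₀, ht₀⟩ := hf'.exists_forall_of_atTop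
  -- FTC representation for t ≥ t₀
  have key : ∀ t, t₀ ≤ t → ‖z t‖ ≤ Real.exp (r.re * t) * ‖g t₀‖ + ε / 2 := by
    intro t ht
    have hcont : Continuous fun s : ℝ => Complex.exp (-(r * s)) * f s := by
      exact (Complex.continuous_exp.comp (by continuity)).mul hf
    have hftc : g t - g t₀ = ∫ s in t₀..t, Complex.exp (-(r * s)) * f s :=
      (intervalIntegral.integral_eq_sub_of_hasDerivAt (fun s _ => hgd s)
        (hcont.intervalIntegrable _ _)).symm
    have hz : z t = Complex.exp (r * t) * g t₀ + Complex.exp (r * t) * (g t - g t₀) := by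
      have : Complex.exp (r * t) * g t = z t := by
        rw [hg]; simp only []
        rw [Complex.exp_neg, ← mul_assoc, mul_inv_cancel₀ (Complex.exp_ne_zero _), one_mul]
      rw [mul_sub, ← this]; ring
    have hb1 : ‖Complex.exp (r * t) * g t₀‖ = Real.exp (r.re * t) * ‖g t₀‖ := by
      rw [norm_mul, Complex.norm_exp]
      norm_num
    have hb2 : ‖Complex.exp (r * t) * (g t - g t₀)‖ ≤ ε / 2 := by
      rw [norm_mul, hftc]
      have hnorm : ‖∫ s in t₀..t, Complex.exp (-(r * s)) * f s‖
          ≤ ∫ s in t₀..t, Real.exp (μ * s) * (μ * ε / 2) := by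
        refine (intervalIntegral.norm_integral_le_integral_norm ht).trans ?_
        apply intervalIntegral.integral_mono_on ht
        · exact (hcont.norm).intervalIntegrable _ _
        · exact (((Real.continuous_exp.comp (continuous_const.mul continuous_id)).mul continuous_const)).intervalIntegrable _ _
        · intro s hs
          rw [norm_mul, Complex.norm_exp]
          have : (-(r * s)).re = μ * s := by simp [hμdef]
          rw [this]
          exact mul_le_mul_of_nonneg_left (ht₀ s hs.1) (Real.exp_nonneg _)
      have hint : (∫ s in t₀..t, Real.exp (μ * s) * (μ * ε / 2))
          = (Real.exp (μ * t) - Real.exp (μ * t₀)) / μ * (μ * ε / 2) := by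
        rw [intervalIntegral.integral_mul_const]
        congr 1
        have : ∀ s ∈ Set.uIcc t₀ t, HasDerivAt (fun s => Real.exp (μ * s) / μ)
            (Real.exp (μ * s)) s := by
          intro s _
          have := ((hasDerivAt_id s).const_mul μ).exp
          refine (this.div_const μ).congr_deriv ?_
          field_simp
          rfl
        rw [intervalIntegral.integral_eq_sub_of_hasDerivAt this
          ((Real.continuous_exp.comp (continuous_const.mul continuous_id)).intervalIntegrable _ _)]
        ring
      calc ‖Complex.exp (r * t)‖ * ‖∫ s in t₀..t, Complex.exp (-(r * s)) * f s‖
          ≤ Real.exp (r.re * t) * ((Real.exp (μ * t) - Real.exp (μ * t₀)) / μ * (μ * ε / 2)) := by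
            apply mul_le_mul
            · rw [Complex.norm_exp]; norm_num
            · rw [← hint]; exact hnorm
            · exact norm_nonneg _
            · positivity
        _ ≤ ε / 2 := by
            have hE : Real.exp (r.re * t) * Real.exp (μ * t) = 1 := by
              rw [← Real.exp_add, show r.re * t + μ * t = 0 by rw [hμdef]; ring,
                Real.exp_zero]
            have hq : (Real.exp (μ * t) - Real.exp (μ * t₀)) / μ * (μ * ε / 2)
                = (Real.exp (μ * t) - Real.exp (μ * t₀)) * (ε / 2) := by
              field_simp
            rw [hq]
            nlinarith [Real.exp_pos (r.re * t), Real.exp_pos (μ * t₀), hE,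
              mul_pos (Real.exp_pos (r.re * t)) (Real.exp_pos (μ * t₀)), hε]
    calc ‖z t‖ ≤ ‖Complex.exp (r * t) * g t₀‖ + ‖Complex.exp (r * t) * (g t - g t₀)‖ := by
          rw [hz]; exact norm_add_le _ _
      _ ≤ Real.exp (r.re * t) * ‖g t₀‖ + ε / 2 := by rw [hb1]; linarith
  -- first term tends to 0
  have hterm : Tendsto (fun t => Real.exp (r.re * t) * ‖g t₀‖) atTop (nhds 0) := by
    have h1 : Tendsto (fun t : ℝ => r.re * t) atTop atBot :=
      tendsto_id.const_mul_atTop_of_neg hr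
    have := (Real.tendsto_exp_atBot.comp h1).mul_const ‖g t₀‖
    simpa using this
  have hev : ∀ᶠ t in atTop, Real.exp (r.re * t) * ‖g t₀‖ < ε / 2 := by
    have := hterm.eventually (eventually_lt_nhds (show (0:ℝ) < ε/2 by positivity))
    simpa using this
  filter_upwards [hev, eventually_ge_atTop t₀] with t h1 h2
  calc ‖z t‖ ≤ Real.exp (r.re * t) * ‖g t₀‖ + ε / 2 := key t h2
    _ < ε / 2 + ε / 2 := by linarith
    _ = ε := by ring

private lemma roots_exist (c₀ c₁ : ℝ) (h0 : 0 < c₀) (h1 : 0 < c₁) :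
    ∃ r₁ r₂ : ℂ, r₁.re < 0 ∧ r₂.re < 0 ∧ r₁ + r₂ = -c₁ ∧ r₁ * r₂ = c₀ := by
  by_cases h : 4 * c₀ ≤ c₁ ^ 2
  · set s : ℝ := Real.sqrt (c₁ ^ 2 - 4 * c₀) with hs
    have hs2 : s ^ 2 = c₁ ^ 2 - 4 * c₀ := Real.sq_sqrt (by linarith)
    have hslt : s < c₁ := by
      nlinarith [Real.sqrt_nonneg (c₁ ^ 2 - 4 * c₀), hs2]
    have hsnn : 0 ≤ s := Real.sqrt_nonneg _
    refine ⟨(((-c₁ + s) / 2 : ℝ) : ℂ), (((-c₁ - s) / 2 : ℝ) : ℂ), ?_, ?_, ?_, ?_⟩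
    · simp only [Complex.ofReal_re]; linarith
    · simp only [Complex.ofReal_re]; linarith
    · push_cast; ring
    · have : ((-c₁ + s) / 2) * ((-c₁ - s) / 2) = c₀ := by nlinarith [hs2]
      push_cast [← this]; push_cast; ring
  · push_neg at h
    set s : ℝ := Real.sqrt (4 * c₀ - c₁ ^ 2) with hs
    have hs2 : s ^ 2 = 4 * c₀ - c₁ ^ 2 := Real.sq_sqrt (by linarith)
    refine ⟨(↑(-c₁ / 2) + ↑(s / 2) * Complex.I), (↑(-c₁ / 2) - ↑(s / 2) * Complex.I),
      ?_, ?_, ?_, ?_⟩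
    · simp [Complex.add_re, Complex.ofReal_re, Complex.mul_re]; linarith
    · simp [Complex.sub_re, Complex.ofReal_re, Complex.mul_re]; linarith
    · push_cast; ring
    · have hs2' : (s : ℂ) ^ 2 = 4 * c₀ - c₁ ^ 2 := by
        rw [show ((4:ℂ) * c₀ - c₁ ^ 2) = ((4 * c₀ - c₁ ^ 2 : ℝ) : ℂ) by push_cast; ring,
          ← hs2]; push_cast; ring
      have hI : Complex.I ^ 2 = -1 := Complex.I_sq
      push_cast
      linear_combination ((1:ℂ)/4) * hs2' - ((s:ℂ)/2) ^ 2 * hI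

private lemma barbalat_aux (e : ℝ → ℝ) (hec : Continuous e) (L B : ℝ) (hL : 0 < L)
    (hlip : ∀ s t : ℝ, 0 ≤ s → 0 ≤ t → |e s - e t| ≤ L * |s - t|)
    (hint : ∀ t : ℝ, 0 ≤ t → (∫ s in (0:ℝ)..t, (e s)^2) ≤ B) :
    Tendsto e atTop (nhds 0) := by
  set F : ℝ → ℝ := fun t => ∫ s in (0:ℝ)..t, (e s)^2 with hF
  have hsq : Continuous fun s => (e s)^2 := (hec.pow 2)
  have hii : ∀ a b : ℝ, IntervalIntegrable (fun s => (e s)^2) MeasureTheory.volume a b :=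
    fun a b => hsq.intervalIntegrable a b
  have hdiff : ∀ s t : ℝ, F t - F s = ∫ u in s..t, (e u)^2 := by
    intro s t
    rw [hF]
    simp only []
    rw [← intervalIntegral.integral_add_adjacent_intervals (hii 0 s) (hii s t)]
    ring
  have hmono : Monotone F := by
    intro s t hst
    have h0 : (0:ℝ) ≤ ∫ u in s..t, (e u)^2 :=
      intervalIntegral.integral_nonneg hst (fun u _ => sq_nonneg _)
    have := hdiff s t
    linarith
  have hbdd : BddAbove (Set.range F) := by
    refine ⟨max B 0, ?_⟩
    rintro _ ⟨t, rfl⟩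
    rcases le_or_gt 0 t with h | h
    · exact le_max_of_le_left (hint t h)
    · have : F t ≤ F 0 := hmono h.le
      have hF0 : F 0 = 0 := by simp [hF]
      rw [hF0] at this
      exact le_max_of_le_right this
  have hlim : Tendsto F atTop (nhds (⨆ t, F t)) := tendsto_atTop_ciSup hmono hbdd
  set l := ⨆ t, F t with hl
  rw [NormedAddCommGroup.tendsto_nhds_zero]
  intro ε hε
  set δ : ℝ := ε^2/4 * (ε/(2*L)) with hδ
  have hδpos : 0 < δ := by positivity
  have hev : ∀ᶠ T in atTop, l - δ < F T :=
    hlim.eventually (eventually_gt_nhds (by linarith))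
  obtain ⟨T, hT⟩ := (hev.and (eventually_ge_atTop (0:ℝ))).exists_forall_of_atTop
  filter_upwards [eventually_ge_atTop T] with t ht
  obtain ⟨hFT, hT0⟩ := hT T le_rfl
  have ht0 : (0:ℝ) ≤ t := le_trans hT0 ht
  by_contra hcon
  push_neg at hcon
  have habs : ε ≤ |e t| := by
    rw [Real.norm_eq_abs] at hcon; linarith [hcon]
  set dt : ℝ := ε/(2*L) with hdt
  have hdtpos : 0 < dt := by positivity
  have hlow : ∀ u ∈ Set.Icc t (t + dt), ε/2 ≤ |e u| := by
    intro u hu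
    have hu0 : 0 ≤ u := le_trans ht0 hu.1
    have h1 : |e u - e t| ≤ L * |u - t| := hlip u t hu0 ht0
    have h2 : |u - t| ≤ dt := by
      rw [abs_of_nonneg (by linarith [hu.1])]
      linarith [hu.2]
    have h3 : L * |u - t| ≤ L * dt := by nlinarith
    have h4 : L * dt = ε/2 := by rw [hdt]; field_simp
    have := abs_sub_abs_le_abs_sub (e t) (e u)
    rw [abs_sub_comm (e t) (e u)] at this
    linarith [habs]
  have hlow2 : ∀ u ∈ Set.Icc t (t + dt), ε^2/4 ≤ (e u)^2 := by
    intro u hu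
    have := hlow u hu
    nlinarith [sq_abs (e u)]
  have hge : δ ≤ F (t + dt) - F t := by
    rw [hdiff t (t + dt)]
    have : (∫ u in t..(t+dt), (ε^2/4 : ℝ)) ≤ ∫ u in t..(t+dt), (e u)^2 := by
      apply intervalIntegral.integral_mono_on (by linarith)
        (intervalIntegrable_const) (hii t (t+dt))
      exact hlow2
    rw [intervalIntegral.integral_const] at this
    have heq : (t + dt - t) • (ε^2/4 : ℝ) = δ := by
      rw [smul_eq_mul, hδ]; ring_nf
    rw [heq] at this
    exact this
  have hle : F (t + dt) ≤ l := le_ciSup hbdd (t + dt)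
  have hFt : F T ≤ F t := hmono ht
  linarith

/-- Main theorem: global stability and trajectory tracking of the adaptive fuzzy
controller for the electrohydraulic servosystem with dead-zone. Under the control law
`u = û + ⟨D̂, Ψ(û)⟩ - κ e`, the adaptation law `D̂' = -φ e Ψ(û)`, and an optimal parameter
vector `D*` with `⟨D*, Ψ(û)⟩ = d`, the signals `e` and `D̂ - D*` stay bounded, `e → 0`,
and the tracking error `x̃ = x - x_d` satisfies `x̃ → 0` and `x̃' → 0`. -/
theorem adaptive_fuzzy_global_stability_and_tracking
    (a₀ a₁ a₂ b c₀ c₁ κ φ : ℝ)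
    (hb : 0 < b) (hc₀ : 0 < c₀) (hc₁ : 0 < c₁) (hκ : 0 < κ) (hφ : 0 < φ)
    (N : ℕ) (hN : 0 < N)
    (Dstar : EuclideanSpace ℝ (Fin N))
    (Ψ : ℝ → EuclideanSpace ℝ (Fin N)) (hΨ : ∀ z : ℝ, ‖Ψ z‖ ≤ 1)
    (x_d x : ℝ → ℝ)
    (hxd : Differentiable ℝ x_d) (hxd' : Differentiable ℝ (deriv x_d))
    (hxd'' : Differentiable ℝ (deriv (deriv x_d)))
    (hxdbdd : ∃ M : ℝ, ∀ t : ℝ, 0 ≤ t →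
      |x_d t| ≤ M ∧ |deriv x_d t| ≤ M ∧ |deriv (deriv x_d) t| ≤ M ∧
        |deriv (deriv (deriv x_d)) t| ≤ M)
    (hx : Differentiable ℝ x) (hx' : Differentiable ℝ (deriv x))
    (hx'' : Differentiable ℝ (deriv (deriv x)))
    (Dhat : ℝ → EuclideanSpace ℝ (Fin N)) (hDhat : Differentiable ℝ Dhat)
    (d : ℝ → ℝ)
    (xtil e uhat u : ℝ → ℝ)
    (hxtil : ∀ t : ℝ, xtil t = x t - x_d t)
    (he : ∀ t : ℝ, e t = c₀ * xtil t + c₁ * deriv xtil t + deriv (deriv xtil) t)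
    (huhat : ∀ t : ℝ, uhat t = b⁻¹ * (a₀ * x t + a₁ * deriv x t + a₂ * deriv (deriv x) t
      + deriv (deriv (deriv x_d)) t - c₁ * deriv (deriv xtil) t - c₀ * deriv xtil t))
    (hu : ∀ t : ℝ, u t = uhat t + ⟪Dhat t, Ψ (uhat t)⟫ - κ * e t)
    (hsys : ∀ t : ℝ, 0 ≤ t → deriv (deriv (deriv x)) t =
      -a₀ * x t - a₁ * deriv x t - a₂ * deriv (deriv x) t + b * u t - b * d t)
    (hadapt : ∀ t : ℝ, 0 ≤ t → deriv Dhat t = -(φ * e t) • Ψ (uhat t))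
    (hopt : ∀ t : ℝ, 0 ≤ t → ⟪Dstar, Ψ (uhat t)⟫ = d t) :
    (∃ C : ℝ, ∀ t : ℝ, 0 ≤ t → |e t| ≤ C ∧ ‖Dhat t - Dstar‖ ≤ C) ∧
      Tendsto e atTop (nhds 0) ∧
      Tendsto xtil atTop (nhds 0) ∧ Tendsto (deriv xtil) atTop (nhds 0) := by
  -- derivative identities for xtil
  have hxteq : xtil = fun t => x t - x_d t := funext hxtil
  have hxt_d : Differentiable ℝ xtil := by rw [hxteq]; exact hx.sub hxd
  have d1 : deriv xtil = fun t => deriv x t - deriv x_d t := by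
    funext t; rw [hxteq]; exact deriv_sub (hx t) (hxd t)
  have hxt1_d : Differentiable ℝ (deriv xtil) := by rw [d1]; exact hx'.sub hxd'
  have d2 : deriv (deriv xtil) = fun t => deriv (deriv x) t - deriv (deriv x_d) t := by
    funext t; rw [d1]; exact deriv_sub (hx' t) (hxd' t)
  have hxt2_d : Differentiable ℝ (deriv (deriv xtil)) := by rw [d2]; exact hx''.sub hxd''
  have d3 : ∀ t, deriv (deriv (deriv xtil)) t
      = deriv (deriv (deriv x)) t - deriv (deriv (deriv x_d)) t := by
    intro t; rw [d2]; exact deriv_sub (hx'' t) (hxd'' t)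
  have heeq : e = fun t => c₀ * xtil t + c₁ * deriv xtil t + deriv (deriv xtil) t :=
    funext he
  have he_d : Differentiable ℝ e := by
    rw [heeq]
    exact ((hxt_d.const_mul c₀).add (hxt1_d.const_mul c₁)).add hxt2_d
  have hee : ∀ t, HasDerivAt e (c₀ * deriv xtil t + c₁ * deriv (deriv xtil) t
      + deriv (deriv (deriv xtil)) t) t := by
    intro t
    rw [heeq]
    exact (((hxt_d t).hasDerivAt.const_mul c₀).add
      ((hxt1_d t).hasDerivAt.const_mul c₁)).add (hxt2_d t).hasDerivAt
  -- error dynamics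
  have keyE : ∀ t, 0 ≤ t →
      deriv e t = b * ⟪Dhat t - Dstar, Ψ (uhat t)⟫ - b * κ * e t := by
    intro t ht
    have hbu : b * uhat t = a₀ * x t + a₁ * deriv x t + a₂ * deriv (deriv x) t
        + deriv (deriv (deriv x_d)) t - c₁ * deriv (deriv xtil) t
        - c₀ * deriv xtil t := by
      rw [huhat t]; field_simp
    have h1 := (hee t).deriv
    rw [d3 t, hsys t ht, hu t] at h1
    rw [inner_sub_left, hopt t ht]
    linear_combination h1 + hbu
  -- Lyapunov function
  set V : ℝ → ℝ := fun t => (e t) ^ 2 / 2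
    + b / (2 * φ) * ⟪Dhat t - Dstar, Dhat t - Dstar⟫ with hV
  clear_value V
  have hVdiff : Differentiable ℝ V := by
    rw [hV]
    exact ((he_d.pow 2).div_const 2).add
      (((hDhat.sub_const Dstar).inner ℝ (hDhat.sub_const Dstar)).const_mul _)
  have hVd : ∀ t, 0 ≤ t → HasDerivAt V (-(b * κ) * (e t) ^ 2) t := by
    intro t ht
    have hD : HasDerivAt (fun s => Dhat s - Dstar) (deriv Dhat t) t :=
      (hDhat t).hasDerivAt.sub_const Dstar
    have hIP := hD.inner ℝ hD
    have hE2 : HasDerivAt (fun s => (e s) ^ 2 / 2) (e t * deriv e t) t := by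
      have := ((he_d t).hasDerivAt.pow 2).div_const 2
      refine this.congr_deriv ?_
      ring
    have := hE2.add (hIP.const_mul (b / (2 * φ)))
    rw [hV]
    refine this.congr_deriv ?_
    rw [hadapt t ht, keyE t ht, real_inner_smul_right, real_inner_smul_left,
      real_inner_comm (Dhat t - Dstar) (Ψ (uhat t))]
    field_simp
    ring
  -- V is nonincreasing on [0,∞) and nonneg
  have hVanti : AntitoneOn V (Set.Ici (0:ℝ)) := by
    apply antitoneOn_of_deriv_nonpos (convex_Ici 0) hVdiff.continuous.continuousOn
      (hVdiff.differentiableOn)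
    intro t ht
    rw [interior_Ici] at ht
    rw [(hVd t (le_of_lt ht)).deriv]
    nlinarith [sq_nonneg (e t), mul_pos hb hκ]
  have hVnn : ∀ t, 0 ≤ V t := by
    intro t
    have h1 : (0:ℝ) ≤ ⟪Dhat t - Dstar, Dhat t - Dstar⟫ := real_inner_self_nonneg
    have h2 : (0:ℝ) ≤ (e t) ^ 2 := sq_nonneg _
    have : 0 ≤ b / (2 * φ) := by positivity
    rw [hV]; positivity
  have hVle : ∀ t, 0 ≤ t → V t ≤ V 0 :=
    fun t ht => hVanti Set.self_mem_Ici ht ht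
  -- boundedness
  set C : ℝ := Real.sqrt (2 * V 0) + Real.sqrt (2 * φ / b * V 0) + 1 with hC
  have hCpos : 0 < C := by positivity
  have hbound : ∀ t : ℝ, 0 ≤ t → |e t| ≤ C ∧ ‖Dhat t - Dstar‖ ≤ C := by
    intro t ht
    have h1 := hVle t ht
    have hipn : ⟪Dhat t - Dstar, Dhat t - Dstar⟫ = ‖Dhat t - Dstar‖ ^ 2 :=
      real_inner_self_eq_norm_sq _
    have hVt : V t = (e t) ^ 2 / 2
        + b / (2 * φ) * ⟪Dhat t - Dstar, Dhat t - Dstar⟫ := by rw [hV]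
    rw [hipn] at hVt
    rw [hVt] at h1
    have hP : 0 ≤ b / (2 * φ) * ‖Dhat t - Dstar‖ ^ 2 := by positivity
    constructor
    · have he2 : (e t) ^ 2 ≤ 2 * V 0 := by linarith only [h1, hP]
      calc |e t| = Real.sqrt ((e t) ^ 2) := (Real.sqrt_sq_eq_abs _).symm
        _ ≤ Real.sqrt (2 * V 0) := Real.sqrt_le_sqrt he2
        _ ≤ C := by
            rw [hC]
            have := Real.sqrt_nonneg (2 * φ / b * V 0)
            linarith
    · have hD2 : ‖Dhat t - Dstar‖ ^ 2 ≤ 2 * φ / b * V 0 := by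
        have key : b / (2 * φ) * ‖Dhat t - Dstar‖ ^ 2 ≤ V 0 := by
          have h2 := sq_nonneg (e t); linarith only [h1, h2]
        calc ‖Dhat t - Dstar‖ ^ 2
            = (b / (2 * φ) * ‖Dhat t - Dstar‖ ^ 2) * (2 * φ / b) := by
              field_simp
          _ ≤ V 0 * (2 * φ / b) := mul_le_mul_of_nonneg_right key (by positivity)
          _ = 2 * φ / b * V 0 := by ring
      calc ‖Dhat t - Dstar‖ = Real.sqrt (‖Dhat t - Dstar‖ ^ 2) := by
            rw [Real.sqrt_sq (norm_nonneg _)]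
        _ ≤ Real.sqrt (2 * φ / b * V 0) := Real.sqrt_le_sqrt hD2
        _ ≤ C := by
            rw [hC]
            have := Real.sqrt_nonneg (2 * V 0)
            linarith
  refine ⟨⟨C, hbound⟩, ?_⟩
  -- integral bound on e^2
  have hbk : 0 < b * κ := mul_pos hb hκ
  have hIbd : ∀ t : ℝ, 0 ≤ t → (∫ s in (0:ℝ)..t, (e s) ^ 2) ≤ V 0 / (b * κ) := by
    intro t ht
    have hftc : (∫ s in (0:ℝ)..t, -(b * κ) * (e s) ^ 2) = V t - V 0 := by
      apply intervalIntegral.integral_eq_sub_of_hasDerivAt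
      · intro s hs
        rw [Set.uIcc_of_le ht] at hs
        exact hVd s hs.1
      · exact (continuous_const.mul ((he_d.continuous.pow 2))).intervalIntegrable _ _
    rw [intervalIntegral.integral_const_mul] at hftc
    have hVt0 := hVnn t
    have hI : (∫ s in (0:ℝ)..t, (e s) ^ 2) = (V 0 - V t) / (b * κ) := by
      field_simp
      linarith [hftc]
    rw [hI]
    exact (div_le_div_iff_of_pos_right hbk).mpr (by linarith)
  -- Lipschitz bound for e
  set L : ℝ := b * C + b * κ * C with hLdef
  have hLpos : 0 < L := by positivity
  have hL : ∀ t : ℝ, 0 ≤ t → |deriv e t| ≤ L := by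
    intro t ht
    rw [keyE t ht]
    have h1 : |⟪Dhat t - Dstar, Ψ (uhat t)⟫| ≤ C := by
      calc |⟪Dhat t - Dstar, Ψ (uhat t)⟫|
          ≤ ‖Dhat t - Dstar‖ * ‖Ψ (uhat t)‖ := abs_real_inner_le_norm _ _
        _ ≤ C * 1 := by
            apply mul_le_mul (hbound t ht).2 (hΨ _) (norm_nonneg _) hCpos.le
        _ = C := mul_one C
    have h2 := (hbound t ht).1
    have h3 : |b * ⟪Dhat t - Dstar, Ψ (uhat t)⟫ - b * κ * e t|
        ≤ |b * ⟪Dhat t - Dstar, Ψ (uhat t)⟫| + |b * κ * e t| := by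
      rw [sub_eq_add_neg]
      exact (abs_add_le _ _).trans (by rw [abs_neg])
    have h4 : |b * ⟪Dhat t - Dstar, Ψ (uhat t)⟫| ≤ b * C := by
      rw [abs_mul, abs_of_pos hb]
      exact mul_le_mul_of_nonneg_left h1 hb.le
    have h5 : |b * κ * e t| ≤ b * κ * C := by
      rw [abs_mul, abs_of_pos hbk]
      exact mul_le_mul_of_nonneg_left h2 hbk.le
    rw [hLdef]
    linarith
  have hlip : ∀ s t : ℝ, 0 ≤ s → 0 ≤ t → |e s - e t| ≤ L * |s - t| := by
    intro s t hs ht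
    have := (convex_Ici (0:ℝ)).norm_image_sub_le_of_norm_deriv_le (f := e)
      (fun u _ => he_d u) (fun u hu => by simpa [Real.norm_eq_abs] using hL u hu)
      ht hs
    simpa [Real.norm_eq_abs] using this
  have he0 : Tendsto e atTop (nhds 0) :=
    barbalat_aux e he_d.continuous L (V 0 / (b * κ)) hLpos hlip hIbd
  -- roots of the characteristic polynomial
  obtain ⟨r₁, r₂, hr₁, hr₂, hsum, hprod⟩ := roots_exist c₀ c₁ hc₀ hc₁
  set y : ℝ → ℂ := fun t => ((xtil t : ℝ) : ℂ) with hydef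
  set z : ℝ → ℂ := fun t => ((deriv xtil t : ℝ) : ℂ) - r₁ * ((xtil t : ℝ) : ℂ) with hzdef
  have hyd : ∀ t, HasDerivAt y (((deriv xtil t : ℝ) : ℂ)) t := by
    intro t
    rw [hydef]
    exact ((hxt_d t).hasDerivAt).ofReal_comp
  have hzd : ∀ t, HasDerivAt z (r₂ * z t + ((e t : ℝ) : ℂ)) t := by
    intro t
    have h1 : HasDerivAt (fun s => ((deriv xtil s : ℝ) : ℂ))
        (((deriv (deriv xtil) t : ℝ) : ℂ)) t := ((hxt1_d t).hasDerivAt).ofReal_comp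
    have h2 := (hyd t).const_mul r₁
    have h3 := h1.sub h2
    rw [hzdef]
    refine h3.congr_deriv ?_
    have he' : (deriv (deriv xtil) t : ℝ) = e t - c₀ * xtil t - c₁ * deriv xtil t := by
      linarith [he t]
    rw [he']
    push_cast
    linear_combination (((xtil t : ℝ) : ℂ)) * hprod - (((deriv xtil t : ℝ) : ℂ)) * hsum
  have hcontz : Continuous z := by
    rw [hzdef]
    exact (Complex.continuous_ofReal.comp hxt1_d.continuous).sub
      (continuous_const.mul (Complex.continuous_ofReal.comp hxt_d.continuous))
  have hez : Tendsto (fun t => ((e t : ℝ) : ℂ)) atTop (nhds 0) := by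
    have := (Complex.continuous_ofReal.tendsto 0).comp he0
    exact this
  have hz0 : Tendsto z atTop (nhds 0) :=
    decay_aux r₂ hr₂ z _ (Complex.continuous_ofReal.comp he_d.continuous) hzd hez
  have hyd2 : ∀ t, HasDerivAt y (r₁ * y t + z t) t := by
    intro t
    convert hyd t using 1
    rw [hzdef, hydef]
    ring
  have hy0 : Tendsto y atTop (nhds 0) := decay_aux r₁ hr₁ y z hcontz hyd2 hz0
  have hxt0 : Tendsto xtil atTop (nhds 0) := by
    have h := (Complex.continuous_re.tendsto 0).comp hy0
    have heq : ∀ t, ((y t).re) = xtil t := by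
      intro t; rw [hydef]; simp
    simpa [Function.comp, heq] using h.congr fun t => heq t
  have hdx0 : Tendsto (deriv xtil) atTop (nhds 0) := by
    have hsum0 : Tendsto (fun t => z t + r₁ * y t) atTop (nhds 0) := by
      have := hz0.add (hy0.const_mul r₁)
      simpa using this
    have h := (Complex.continuous_re.tendsto 0).comp hsum0
    have heq : ∀ t, ((z t + r₁ * y t).re) = deriv xtil t := by
      intro t
      rw [hzdef, hydef]
      have : ((deriv xtil t : ℝ) : ℂ) - r₁ * ((xtil t : ℝ) : ℂ) + r₁ * ((xtil t : ℝ) : ℂ)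
          = ((deriv xtil t : ℝ) : ℂ) := by ring
      rw [this, Complex.ofReal_re]
    simpa [Function.comp] using h.congr fun t => heq t
  exact ⟨he0, hxt0, hdx0⟩
end
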